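/- Let Ω be a nonempty proper open subset of ℝⁿ and let ε,δ>0. Then: (i) if Ω is an (ε,δ)-domain with rad(Ω)>0, then Ω is locally an (ε,δ)-domain near ∂Ω; (ii) if Ω is locally an (ε,δ)-domain near ∂Ω, then there exists δ'>0 such that Ω is an (ε,δ')-domain. -/

import Mathlib

open MeasureTheory Set Filter Topology Metric
open scoped ENNReal NNReal

noncomputable section

abbrev Rn (n : ℕ) := EuclideanSpace ℝ (Fin n)

/-- First-order partial derivative in coordinate direction `i`. -/
def pderivI {n : ℕ} (i : Fin n) (f : Rn n → ℝ) : Rn n → ℝ :=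
  fun x => fderiv ℝ f x (EuclideanSpace.single i 1)

/-- Iterated partial derivative in direction `i`. -/
def pderivPow {n : ℕ} (i : Fin n) : ℕ → (Rn n → ℝ) → (Rn n → ℝ)
  | 0, f => f
  | m + 1, f => pderivI i (pderivPow i m f)

/-- Partial derivative `∂^α` for a multi-index `α`. -/
def pderivMulti {n : ℕ} (α : Fin n → ℕ) (f : Rn n → ℝ) : Rn n → ℝ :=
  (List.finRange n).foldr (fun i g => pderivPow i (α i) g) f

/-- The (finite) set of multi-indices of degree at most `k`. -/
def multiIdx (n k : ℕ) : Finset (Fin n → ℕ) :=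
  ((Finset.univ : Finset (Fin n → Fin (k + 1))).image fun f i => (f i : ℕ)).filter
    fun α => (∑ i, α i) ≤ k

/-- `v` is the `α`-th distributional (weak) derivative of `u` on the open set `O`. -/
def IsWeakDerivOn {n : ℕ} (O : Set (Rn n)) (α : Fin n → ℕ) (u v : Rn n → ℝ) : Prop :=
  ∀ φ : Rn n → ℝ, ContDiff ℝ (⊤ : ℕ∞) φ → HasCompactSupport φ → tsupport φ ⊆ O →
    ∫ x in O, u x * pderivMulti α φ x = (-1 : ℝ) ^ (∑ i, α i) * ∫ x in O, v x * φ x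

-- A choice of `α`-th weak derivative of `u` on `O` (junk value if none exists).
open Classical in
def wkDeriv {n : ℕ} (O : Set (Rn n)) (α : Fin n → ℕ) (u : Rn n → ℝ) : Rn n → ℝ :=
  if α = fun _ => 0 then u
  else if h : ∃ v : Rn n → ℝ, IsWeakDerivOn O α u v then h.choose else 0

/-- Membership in the Sobolev space `W^{k,p}(O)`. -/
def MemW {n : ℕ} (O : Set (Rn n)) (k : ℕ) (p : ℝ≥0∞) (u : Rn n → ℝ) : Prop :=
  LocallyIntegrableOn u O volume ∧
    ∀ α : Fin n → ℕ, (∑ i, α i) ≤ k →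
      ∃ v : Rn n → ℝ, IsWeakDerivOn O α u v ∧ MemLp v p (volume.restrict O)

/-- The Sobolev norm `‖u‖_{W^{k,p}(O)}`, as an extended real number. -/
def Wnorm {n : ℕ} (O : Set (Rn n)) (k : ℕ) (p : ℝ≥0∞) (u : Rn n → ℝ) : ℝ≥0∞ :=
  ∑ α ∈ multiIdx n k, eLpNorm (wkDeriv O α u) p (volume.restrict O)

/-- Membership in `W^{k,p}_D(O)`: the closure in `W^{k,p}(O)` of restrictions to `O` of
smooth compactly supported functions on `ℝⁿ` whose support is disjoint from `D`. -/
def MemWD {n : ℕ} (O D : Set (Rn n)) (k : ℕ) (p : ℝ≥0∞) (u : Rn n → ℝ) : Prop :=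
  MemW O k p u ∧
    ∀ ε : ℝ≥0∞, 0 < ε → ∃ φ : Rn n → ℝ, ContDiff ℝ (⊤ : ℕ∞) φ ∧ HasCompactSupport φ ∧
      Disjoint D (tsupport φ) ∧ Wnorm O k p (fun x => u x - φ x) < ε

/-- Membership in `W̊^{k,p}(O)`: the closure of `C_c^∞(O)` in `W^{k,p}(O)`. -/
def MemW0 {n : ℕ} (O : Set (Rn n)) (k : ℕ) (p : ℝ≥0∞) (u : Rn n → ℝ) : Prop :=
  MemW O k p u ∧
    ∀ ε : ℝ≥0∞, 0 < ε → ∃ φ : Rn n → ℝ, ContDiff ℝ (⊤ : ℕ∞) φ ∧ HasCompactSupport φ ∧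
      tsupport φ ⊆ O ∧ Wnorm O k p (fun x => u x - φ x) < ε

/-- `(ε,δ)`-domain in the sense of Jones. -/
def IsEpsDeltaDomain {n : ℕ} (ε : ℝ) (δ : ℝ≥0∞) (Ω : Set (Rn n)) : Prop :=
  IsOpen Ω ∧ Ω.Nonempty ∧ Ω ≠ univ ∧
    ∀ x ∈ Ω, ∀ y ∈ Ω, ENNReal.ofReal (dist x y) < δ →
      ∃ γ : ℝ → Rn n, ContinuousOn γ (Icc 0 1) ∧ γ 0 = x ∧ γ 1 = y ∧
        (∀ t ∈ Icc (0 : ℝ) 1, γ t ∈ Ω) ∧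
        eVariationOn γ (Icc 0 1) ≤ ENNReal.ofReal (ε⁻¹ * dist x y) ∧
        ∀ t ∈ Icc (0 : ℝ) 1,
          ε * dist (γ t) x * dist (γ t) y / dist x y ≤ infDist (γ t) (frontier Ω)

/-- `rad Ω`: infimum over connected components `C` of `Ω` of `inf_{x∈C} sup_{y∈C} |x-y|`. -/
def rad {n : ℕ} (Ω : Set (Rn n)) : ℝ≥0∞ :=
  ⨅ x ∈ Ω, ⨆ y ∈ connectedComponentIn Ω x, edist x y

/-- `Ω` is locally an `(ε,δ)`-domain near `N ⊆ ∂Ω`. -/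
def IsLocEpsDeltaDomainNear {n : ℕ} (ε : ℝ) (δ : ℝ≥0∞) (Ω N : Set (Rn n)) : Prop :=
  IsOpen Ω ∧ Ω.Nonempty ∧ Ω ≠ univ ∧ N ⊆ frontier Ω ∧
    ∃ (J : Set ℕ) (O : ℕ → Set (Rn n)) (κ : ℝ≥0∞), 0 < κ ∧
      (∀ j ∈ J, IsOpen (O j)) ∧
      (∀ x : Rn n, ∃ s ∈ 𝓝 x, {j | j ∈ J ∧ (O j ∩ s).Nonempty}.Finite) ∧
      (∃ L : ℕ, ∀ x : Rn n, {j | j ∈ J ∧ x ∈ O j}.encard ≤ L) ∧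
      (∀ j ∈ J, ∃ Ωj : Set (Rn n), IsEpsDeltaDomain ε δ Ωj ∧ κ < rad Ωj ∧
        O j ∩ Ω = O j ∩ Ωj) ∧
      (∃ r : ℝ≥0∞, 0 < r ∧ ∀ x ∈ N, ∃ j ∈ J, {y : Rn n | edist y x < r} ⊆ O j)

/-- Support of a measurable function relative to an open set `O`. -/
def msupp {n : ℕ} (O : Set (Rn n)) (v : Rn n → ℝ) : Set (Rn n) :=
  {x | x ∈ closure O ∧
    ¬ ∃ r : ℝ, 0 < r ∧ ∀ᵐ y ∂(volume.restrict (O ∩ Metric.ball x r)), v y = 0}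

/-- `d`-Ahlfors regularity of a set `S ⊆ ℝⁿ`. -/
def AhlforsRegular {n : ℕ} (d : ℝ) (S : Set (Rn n)) : Prop :=
  ∃ C : ℝ, 1 ≤ C ∧ ∀ x ∈ S, ∀ r : ℝ, 0 < r → ENNReal.ofReal r ≤ EMetric.diam S →
    ENNReal.ofReal (C⁻¹ * r ^ d) ≤ μH[d] (Metric.ball x r ∩ S) ∧
    μH[d] (Metric.ball x r ∩ S) ≤ ENNReal.ofReal (C * r ^ d)

/-- Linearity for an operator acting on real-valued functions. -/
def IsLinearMapFn {n : ℕ} (T : (Rn n → ℝ) → (Rn n → ℝ)) : Prop :=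
  (∀ u v : Rn n → ℝ, T (fun x => u x + v x) = fun x => T u x + T v x) ∧
  ∀ (c : ℝ) (u : Rn n → ℝ), T (fun x => c * u x) = fun x => c * T u x

/-- The averages of `v` over balls centered at `x` converge to `c` as the radius shrinks. -/
def traceTendsto {n : ℕ} (v : Rn n → ℝ) (x : Rn n) (c : ℝ) : Prop :=
  Tendsto (fun r : ℝ => ⨍ y in Metric.ball x r, v y ∂volume) (𝓝[>] 0) (𝓝 c)

section Stmt3Helpers

lemma ball_infDist_subset' {n : ℕ} {Ω : Set (Rn n)} (ho : IsOpen Ω) {x : Rn n} (hx : x ∈ Ω) :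
    Metric.ball x (Metric.infDist x (frontier Ω)) ⊆ Ω := by
  rcases le_or_gt (Metric.infDist x (frontier Ω)) 0 with h | h
  · rw [Metric.ball_eq_empty.2 h]; exact empty_subset _
  · refine IsPreconnected.subset_left_of_subset_union ho isClosed_closure.isOpen_compl
      (disjoint_compl_right.mono_left subset_closure) ?_ ⟨x, Metric.mem_ball_self h, hx⟩
      (convex_ball x _).isPreconnected
    intro z hz
    by_cases hzc : z ∈ closure Ω
    · left
      by_contra hzo
      have hzf : z ∈ frontier Ω := ⟨hzc, by rwa [ho.interior_eq]⟩
      have h1 := Metric.infDist_le_dist_of_mem (x := x) hzf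
      rw [Metric.mem_ball, dist_comm] at hz
      linarith
    · right; exact hzc

lemma frontier_transfer' {n : ℕ} {Ω Ωj Oj : Set (Rn n)} (hOj : IsOpen Oj)
    (hΩ : IsOpen Ω) (hΩj : IsOpen Ωj) (hint : Oj ∩ Ω = Oj ∩ Ωj) {w : Rn n}
    (hw : w ∈ frontier Ω) (hwO : w ∈ Oj) : w ∈ frontier Ωj := by
  have hwcl : w ∈ closure Ω := hw.1
  have hwnΩ : w ∉ Ω := fun hmem => hw.2 (by rwa [hΩ.interior_eq])
  constructor
  · rw [mem_closure_iff_nhds]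
    intro U hU
    obtain ⟨V, hVU, hV, hwV⟩ := _root_.mem_nhds_iff.1 hU
    have h1 : ((V ∩ Oj) ∩ Ω).Nonempty := by
      rw [mem_closure_iff_nhds] at hwcl
      exact hwcl (V ∩ Oj) ((hV.inter hOj).mem_nhds ⟨hwV, hwO⟩)
    obtain ⟨v, ⟨hvV, hvO⟩, hvΩ⟩ := h1
    have hv2 : v ∈ Oj ∩ Ωj := by
      have hmem : v ∈ Oj ∩ Ω := ⟨hvO, hvΩ⟩
      rwa [hint] at hmem
    exact ⟨v, hVU hvV, hv2.2⟩
  · rw [hΩj.interior_eq]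
    intro hwΩj
    have hmem : w ∈ Oj ∩ Ωj := ⟨hwO, hwΩj⟩
    rw [← hint] at hmem
    exact hwnΩ hmem.2

lemma eps_le_one' {n : ℕ} {ε : ℝ} {δ : ℝ≥0∞} (hε : 0 < ε) (hδ : 0 < δ)
    {Ωj : Set (Rn n)} (hj : IsEpsDeltaDomain ε δ Ωj) (hrad : 0 < rad Ωj) : ε ≤ 1 := by
  obtain ⟨hoj, ⟨x0, hx0⟩, _, hcurve⟩ := hj
  have hle : rad Ωj ≤ ⨆ y ∈ connectedComponentIn Ωj x0, edist x0 y := by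
    unfold rad; exact iInf₂_le x0 hx0
  have hsup : 0 < ⨆ y ∈ connectedComponentIn Ωj x0, edist x0 y := lt_of_lt_of_le hrad hle
  rw [lt_iSup_iff] at hsup
  obtain ⟨y0, hy0'⟩ := hsup
  rw [lt_iSup_iff] at hy0'
  obtain ⟨hy0, hdist0⟩ := hy0'
  have hne0 : x0 ≠ y0 := by
    intro h; rw [h, edist_self] at hdist0; exact lt_irrefl _ hdist0
  have hD : 0 < dist x0 y0 := dist_pos.2 hne0
  obtain ⟨m, hm0, hmD, hmδ⟩ : ∃ m : ℝ, 0 < m ∧ m ≤ dist x0 y0 ∧ ENNReal.ofReal m < δ := by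
    rcases lt_or_ge (ENNReal.ofReal (dist x0 y0)) δ with h | h
    · exact ⟨dist x0 y0, hD, le_refl _, h⟩
    · have hδtop : δ ≠ ⊤ := fun ht => by
        rw [ht] at h; exact (ENNReal.ofReal_lt_top.trans_le h).ne rfl
      have hδt : 0 < δ.toReal := ENNReal.toReal_pos hδ.ne' hδtop
      have hδD : δ.toReal ≤ dist x0 y0 := by
        have := (ENNReal.le_ofReal_iff_toReal_le hδtop dist_nonneg).1 h
        exact this
      refine ⟨δ.toReal / 2, by linarith, by linarith, ?_⟩
      calc ENNReal.ofReal (δ.toReal / 2) < ENNReal.ofReal δ.toReal := by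
            rw [ENNReal.ofReal_lt_ofReal_iff hδt]; linarith
        _ = δ := ENNReal.ofReal_toReal hδtop
  have hconn : IsPreconnected (connectedComponentIn Ωj x0) := isPreconnected_connectedComponentIn
  have hcont : ContinuousOn (fun z => dist x0 z) (connectedComponentIn Ωj x0) :=
    (continuous_const.dist continuous_id).continuousOn
  have hmm : m ∈ Icc (dist x0 x0) (dist x0 y0) := by
    rw [dist_self]; exact ⟨hm0.le, hmD⟩
  obtain ⟨z, hz, hdz0⟩ :=
    hconn.intermediate_value (mem_connectedComponentIn hx0) hy0 hcont hmm
  have hdz : dist x0 z = m := hdz0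
  have hzΩ : z ∈ Ωj := connectedComponentIn_subset _ _ hz
  obtain ⟨γ, hγc, hγ0, hγ1, hγmem, hvar, _⟩ :=
    hcurve x0 hx0 z hzΩ (by rw [hdz]; exact hmδ)
  have h01 : (0:ℝ) ∈ Icc (0:ℝ) 1 := Set.left_mem_Icc.2 zero_le_one
  have h11 : (1:ℝ) ∈ Icc (0:ℝ) 1 := Set.right_mem_Icc.2 zero_le_one
  have hkey : ENNReal.ofReal (dist x0 z) ≤ ENNReal.ofReal (ε⁻¹ * dist x0 z) := by
    calc ENNReal.ofReal (dist x0 z) = edist x0 z := (edist_dist x0 z).symm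
      _ = edist (γ 0) (γ 1) := by rw [hγ0, hγ1]
      _ ≤ eVariationOn γ (Icc 0 1) := eVariationOn.edist_le γ h01 h11
      _ ≤ ENNReal.ofReal (ε⁻¹ * dist x0 z) := hvar
  rw [ENNReal.ofReal_le_ofReal_iff (by positivity)] at hkey
  rw [hdz] at hkey
  have h1 : 1 ≤ ε⁻¹ := by
    have := (mul_le_mul_iff_left₀ hm0).1 (by linarith [hkey] : 1 * m ≤ ε⁻¹ * m)
    exact this
  have := mul_le_mul_of_nonneg_left h1 hε.le
  rwa [mul_one, mul_inv_cancel₀ hε.ne'] at this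

end Stmt3Helpers

/-- Relation between `(ε,δ)`-domains and locally `(ε,δ)`-domains near the
full topological boundary. -/
theorem stmt3 (n : ℕ) (ε : ℝ) (δ : ℝ≥0∞) (hε : 0 < ε) (hδ : 0 < δ)
    (Ω : Set (Rn n)) (hopen : IsOpen Ω) (hne : Ω.Nonempty) (hproper : Ω ≠ univ) :
    (IsEpsDeltaDomain ε δ Ω ∧ 0 < rad Ω →
      IsLocEpsDeltaDomainNear ε δ Ω (frontier Ω)) ∧
    (IsLocEpsDeltaDomainNear ε δ Ω (frontier Ω) →
      ∃ δ' : ℝ≥0∞, 0 < δ' ∧ IsEpsDeltaDomain ε δ' Ω) := by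
  constructor
  · rintro ⟨hdom, hrad⟩
    obtain ⟨κ, hκ0, hκlt⟩ := exists_between hrad
    refine ⟨hopen, hne, hproper, subset_rfl, {0}, fun _ => univ, κ, hκ0,
      fun j _ => isOpen_univ, fun x => ⟨univ, univ_mem, (Set.finite_singleton 0).subset
        (fun j hj => hj.1)⟩, ⟨1, fun x => ?_⟩, fun j _ => ⟨Ω, hdom, hκlt, rfl⟩,
      ⟨1, one_pos, fun x _ => ⟨0, rfl, subset_univ _⟩⟩⟩
    calc {j | j ∈ ({0} : Set ℕ) ∧ x ∈ univ}.encard ≤ ({0} : Set ℕ).encard :=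
          Set.encard_le_encard (fun j hj => hj.1)
      _ = 1 := Set.encard_singleton 0
      _ ≤ (1 : ℕ) := by norm_num
  · rintro ⟨-, -, -, -, J, O, κ, hκ, hOopen, -, -, hΩJ, r, hr, hcov⟩
    have hfr : (frontier Ω).Nonempty := nonempty_frontier_iff.2 ⟨hne, hproper⟩
    -- ε ≤ 1
    obtain ⟨p0, hp0⟩ := hfr
    obtain ⟨j0, hj0, -⟩ := hcov p0 hp0
    obtain ⟨Ω0, hΩ0, hrad0, -⟩ := hΩJ j0 hj0
    have hε1 : ε ≤ 1 := eps_le_one' hε hδ hΩ0 (hκ.trans hrad0)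
    have hεinv : (0:ℝ) < ε⁻¹ := inv_pos.2 hε
    -- radius setup
    set R : ℝ := (min r 1).toReal with hRdef
    have hmin_ne : min r 1 ≠ 0 := (lt_min hr zero_lt_one).ne'
    have hmin_top : min r 1 ≠ ⊤ := (min_le_right r 1).trans_lt (by norm_num) |>.ne
    have hRpos : 0 < R := ENNReal.toReal_pos hmin_ne hmin_top
    have hRof : ENNReal.ofReal R = min r 1 := ENNReal.ofReal_toReal hmin_top
    set s : ℝ := ε * R / 8 with hsdef
    have hspos : 0 < s := by positivity
    have hsR : s ≤ R / 8 := by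
      rw [hsdef]
      have : ε * R ≤ 1 * R := mul_le_mul_of_nonneg_right hε1 hRpos.le
      linarith
    refine ⟨min δ (ENNReal.ofReal s), lt_min hδ (ENNReal.ofReal_pos.2 hspos),
      hopen, hne, hproper, ?_⟩
    intro x hx y hy hxy
    have hdδ : ENNReal.ofReal (dist x y) < δ := hxy.trans_le (min_le_left _ _)
    have hds : dist x y < s := by
      have h1 := hxy.trans_le (min_le_right _ _)
      rwa [ENNReal.ofReal_lt_ofReal_iff hspos] at h1
    have hfrne : (frontier Ω).Nonempty := ⟨p0, hp0⟩
    by_cases hcase : Metric.infDist x (frontier Ω) ≤ R / 3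
    · -- boundary case
      obtain ⟨p, hp, hxp⟩ := (Metric.infDist_lt_iff hfrne).1
        (lt_of_le_of_lt hcase (by linarith : R / 3 < R / 2))
      obtain ⟨j, hj, hball⟩ := hcov p hp
      obtain ⟨Ωj, hΩjdom, -, hinter⟩ := hΩJ j hj
      have hballR : ∀ z : Rn n, dist z p < R → z ∈ O j := by
        intro z hz
        apply hball
        rw [mem_setOf_eq, edist_dist]
        calc ENNReal.ofReal (dist z p) < ENNReal.ofReal R :=
              (ENNReal.ofReal_lt_ofReal_iff hRpos).2 hz
          _ = min r 1 := hRof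
          _ ≤ r := min_le_left _ _
      have hxOj : x ∈ O j := hballR x (by linarith)
      have hyOj : y ∈ O j := hballR y (by
        have := dist_triangle y x p
        rw [dist_comm y x] at this; linarith)
      have hxΩj : x ∈ Ωj := by
        have hmem : x ∈ O j ∩ Ω := ⟨hxOj, hx⟩
        rw [hinter] at hmem; exact hmem.2
      have hyΩj : y ∈ Ωj := by
        have hmem : y ∈ O j ∩ Ω := ⟨hyOj, hy⟩
        rw [hinter] at hmem; exact hmem.2
      obtain ⟨hoj, -, -, hcurve⟩ := hΩjdom
      obtain ⟨γ, hγc, hγ0, hγ1, hγmem, hvar, hγdist⟩ := hcurve x hxΩj y hyΩj hdδ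
      have h01 : (0:ℝ) ∈ Icc (0:ℝ) 1 := Set.left_mem_Icc.2 zero_le_one
      have h11 : (1:ℝ) ∈ Icc (0:ℝ) 1 := Set.right_mem_Icc.2 zero_le_one
      have hdx : ∀ t ∈ Icc (0:ℝ) 1, dist (γ t) x ≤ ε⁻¹ * dist x y := by
        intro t ht
        have h1 : edist (γ t) (γ 0) ≤ eVariationOn γ (Icc 0 1) :=
          eVariationOn.edist_le γ ht h01
        have h2 := h1.trans hvar
        rw [hγ0, edist_dist] at h2
        exact (ENNReal.ofReal_le_ofReal_iff (by positivity)).1 h2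
      have hdy : ∀ t ∈ Icc (0:ℝ) 1, dist (γ t) y ≤ ε⁻¹ * dist x y := by
        intro t ht
        have h1 : edist (γ t) (γ 1) ≤ eVariationOn γ (Icc 0 1) :=
          eVariationOn.edist_le γ ht h11
        have h2 := h1.trans hvar
        rw [hγ1, edist_dist] at h2
        exact (ENNReal.ofReal_le_ofReal_iff (by positivity)).1 h2
      have hεd : ε⁻¹ * dist x y < R / 8 := by
        have h1 : ε⁻¹ * dist x y < ε⁻¹ * s := by
          exact (mul_lt_mul_iff_right₀ hεinv).2 hds
        have h2 : ε⁻¹ * s = R / 8 := by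
          rw [hsdef]; field_simp
        linarith
      have hγp : ∀ t ∈ Icc (0:ℝ) 1, dist (γ t) p < 5 * R / 8 := by
        intro t ht
        have h1 := dist_triangle (γ t) x p
        have h2 := hdx t ht
        linarith
      have hγOj : ∀ t ∈ Icc (0:ℝ) 1, γ t ∈ O j := fun t ht =>
        hballR _ ((hγp t ht).trans (by linarith))
      have hγΩ : ∀ t ∈ Icc (0:ℝ) 1, γ t ∈ Ω := by
        intro t ht
        have hmem : γ t ∈ O j ∩ Ωj := ⟨hγOj t ht, hγmem t ht⟩
        rw [← hinter] at hmem; exact hmem.2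
      refine ⟨γ, hγc, hγ0, hγ1, hγΩ, hvar, ?_⟩
      intro t ht
      have hLHS : ε * dist (γ t) x * dist (γ t) y / dist x y ≤ ε⁻¹ * dist x y := by
        rcases eq_or_lt_of_le (dist_nonneg : (0:ℝ) ≤ dist x y) with h | h
        · rw [← h, div_zero]; positivity
        · rw [div_le_iff₀ h]
          have ha := hdx t ht
          have hb := hdy t ht
          have hab : dist (γ t) x * dist (γ t) y ≤ (ε⁻¹ * dist x y) * (ε⁻¹ * dist x y) :=
            mul_le_mul ha hb dist_nonneg (by positivity)
          have hcc : ε * (dist (γ t) x * dist (γ t) y) ≤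
              ε * ((ε⁻¹ * dist x y) * (ε⁻¹ * dist x y)) :=
            mul_le_mul_of_nonneg_left hab hε.le
          have hid : ε * ((ε⁻¹ * dist x y) * (ε⁻¹ * dist x y)) =
              ε⁻¹ * dist x y * dist x y := by
            field_simp
          nlinarith [hcc, hid]
      by_contra hcon
      push_neg at hcon
      obtain ⟨w, hw, hww⟩ := (Metric.infDist_lt_iff hfrne).1 hcon
      have hwp : dist w p < R := by
        have h1 := dist_triangle w (γ t) p
        have h2 := hγp t ht
        rw [dist_comm w (γ t)] at h1
        linarith
      have hwOj : w ∈ O j := hballR w hwp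
      have hwfrj : w ∈ frontier Ωj :=
        frontier_transfer' (hOopen j hj) hopen hoj hinter hw hwOj
      have h1 : Metric.infDist (γ t) (frontier Ωj) ≤ dist (γ t) w :=
        Metric.infDist_le_dist_of_mem hwfrj
      have h2 := hγdist t ht
      linarith
    · -- interior case
      push_neg at hcase
      set γ : ℝ → Rn n := fun t => x + t • (y - x) with hγdef
      have hγ0 : γ 0 = x := by simp [hγdef]
      have hγ1 : γ 1 = y := by simp [hγdef]
      have hγsub : ∀ a b : ℝ, γ a - γ b = (a - b) • (y - x) := by
        intro a b
        simp only [hγdef, sub_smul]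
        abel
      have hdxt : ∀ t ∈ Icc (0:ℝ) 1, dist (γ t) x ≤ dist x y := by
        intro t ht
        have : γ t - x = t • (y - x) := by
          simp [hγdef]
        rw [dist_eq_norm, this, norm_smul, Real.norm_eq_abs, abs_of_nonneg ht.1]
        calc t * ‖y - x‖ ≤ 1 * ‖y - x‖ :=
              mul_le_mul_of_nonneg_right ht.2 (norm_nonneg _)
          _ = dist x y := by rw [one_mul, ← dist_eq_norm, dist_comm]
      have hdyt : ∀ t ∈ Icc (0:ℝ) 1, dist (γ t) y ≤ dist x y := by
        intro t ht
        have : γ t - y = (t - 1) • (y - x) := by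
          simp only [hγdef, sub_smul, one_smul]
          abel
        rw [dist_eq_norm, this, norm_smul, Real.norm_eq_abs,
          abs_of_nonpos (by linarith [ht.2] : t - 1 ≤ 0)]
        calc -(t - 1) * ‖y - x‖ ≤ 1 * ‖y - x‖ :=
              mul_le_mul_of_nonneg_right (by linarith [ht.1]) (norm_nonneg _)
          _ = dist x y := by rw [one_mul, ← dist_eq_norm, dist_comm]
      have hγc : ContinuousOn γ (Icc 0 1) := by
        apply Continuous.continuousOn
        exact continuous_const.add (continuous_id.smul continuous_const)
      have hγmem : ∀ t ∈ Icc (0:ℝ) 1, γ t ∈ Ω := by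
        intro t ht
        apply ball_infDist_subset' hopen hx
        rw [Metric.mem_ball]
        have h1 := hdxt t ht
        have h2 : dist (γ t) x < s := lt_of_le_of_lt h1 hds
        linarith
      have hlip : LipschitzWith (nndist x y) γ := by
        apply LipschitzWith.of_dist_le_mul
        intro a b
        rw [dist_eq_norm, hγsub, norm_smul, Real.norm_eq_abs]
        rw [← Real.dist_eq]
        have h1 : ‖y - x‖ = dist x y := by rw [← dist_eq_norm, dist_comm]
        rw [h1, coe_nndist]
        ring_nf
        exact le_refl _
      have hvar : eVariationOn γ (Icc 0 1) ≤ ENNReal.ofReal (ε⁻¹ * dist x y) := by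
        have h1 : eVariationOn (γ ∘ id) (Icc (0:ℝ) 1) ≤
            (nndist x y : ℝ≥0∞) * eVariationOn id (Icc (0:ℝ) 1) :=
          hlip.lipschitzOnWith.comp_eVariationOn_le (Set.mapsTo_univ _ _)
        have h2 : eVariationOn (id : ℝ → ℝ) (Icc (0:ℝ) 1) ≤ ENNReal.ofReal 1 := by
          have h3 := (monotoneOn_id (s := Icc (0:ℝ) 1)).eVariationOn_le
            (Set.left_mem_Icc.2 zero_le_one) (Set.right_mem_Icc.2 zero_le_one)
          simpa using h3
        calc eVariationOn γ (Icc (0:ℝ) 1) = eVariationOn (γ ∘ id) (Icc (0:ℝ) 1) := rfl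
          _ ≤ (nndist x y : ℝ≥0∞) * eVariationOn id (Icc (0:ℝ) 1) := h1
          _ ≤ (nndist x y : ℝ≥0∞) * ENNReal.ofReal 1 := by
              exact mul_le_mul_right h2 _
          _ = ENNReal.ofReal (dist x y) := by
              rw [ENNReal.ofReal_one, mul_one, ← edist_dist, edist_nndist]
          _ ≤ ENNReal.ofReal (ε⁻¹ * dist x y) := by
              apply ENNReal.ofReal_le_ofReal
              nlinarith [dist_nonneg (x := x) (y := y), hεinv,
                (one_le_inv_iff₀.2 ⟨hε, hε1⟩ : 1 ≤ ε⁻¹)]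
      refine ⟨γ, hγc, hγ0, hγ1, hγmem, hvar, ?_⟩
      intro t ht
      have hLHS : ε * dist (γ t) x * dist (γ t) y / dist x y ≤ dist x y := by
        rcases eq_or_lt_of_le (dist_nonneg : (0:ℝ) ≤ dist x y) with h | h
        · rw [← h, div_zero]
        · rw [div_le_iff₀ h]
          have ha := hdxt t ht
          have hb := hdyt t ht
          have hab : dist (γ t) x * dist (γ t) y ≤ dist x y * dist x y :=
            mul_le_mul ha hb dist_nonneg dist_nonneg
          nlinarith [hab, dist_nonneg (x := γ t) (y := x), dist_nonneg (x := γ t) (y := y)]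
      have hinf : Metric.infDist x (frontier Ω) ≤
          Metric.infDist (γ t) (frontier Ω) + dist x (γ t) :=
        Metric.infDist_le_infDist_add_dist
      have h2 : dist x (γ t) < s := by
        rw [dist_comm]; exact lt_of_le_of_lt (hdxt t ht) hds
      have h3 : dist x y < R / 8 := lt_of_lt_of_le hds hsR
      linarith
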